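/- For every pair of integers n, m, the class of the matrix [[1, n + m·ω], [0, 1]] lies in Γ₃ (the full lattice of parabolic translations fixing ∞ belongs to Γ(5,2,2,3,3,3)). -/

import Mathlib

/-!
Setup: `PSL(2,ℂ)` as the quotient of `SL(2,ℂ)` by its center, the constants
`u = (1+√5)/2`, `ω = (1+√(-3))/2 = (1+√3·i)/2`, and the generators of the
tetrahedral groups of Neumann–Reid.
-/

noncomputable section

abbrev SL2C := Matrix.SpecialLinearGroup (Fin 2) ℂ

/-- `PSL(2,ℂ)`, the quotient of `SL(2,ℂ)` by its center `{±I}`. -/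
abbrev PSL2C := SL2C ⧸ Subgroup.center SL2C

/-- The projection `SL(2,ℂ) → PSL(2,ℂ)`, `A ↦ [A]`. -/
def pr : SL2C →* PSL2C := QuotientGroup.mk' _

def u : ℂ := ((1 + Real.sqrt 5) / 2 : ℝ)
def ω : ℂ := (1 + Real.sqrt 3 * Complex.I) / 2

lemma u_ne : u ≠ 0 := Complex.ofReal_ne_zero.mpr (by positivity)

lemma ω_ne : ω ≠ 0 := by
  unfold ω
  intro h
  rw [div_eq_zero_iff] at h
  rcases h with h | h
  · have := congrArg Complex.re h
    simp at this
  · norm_num at h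

def xSL : SL2C := ⟨!![u, -u⁻¹; u, 0], by
  rw [Matrix.det_fin_two_of]; field_simp [u_ne]; ring⟩

def ySL : SL2C := ⟨!![0, ω * u⁻¹; -ω⁻¹ * u, 0], by
  rw [Matrix.det_fin_two_of]; field_simp [u_ne, ω_ne]; ring⟩

def zSL : SL2C := ⟨!![0, ω ^ 2 * u⁻¹; -(ω ^ 2)⁻¹ * u, 0], by
  rw [Matrix.det_fin_two_of]; field_simp [u_ne, ω_ne]; ring⟩

def x : PSL2C := pr xSL
def y : PSL2C := pr ySL
def z : PSL2C := pr zSL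

/-- The tetrahedral group `Γ(5,2,2,3,3,3)` as a subgroup of `PSL(2,ℂ)`. -/
def Γ₃ : Subgroup PSL2C := Subgroup.closure {x, y, z}

-- Auxiliary development -----------------------------------------------------

lemma hu2 : u ^ 2 = u + 1 := by
  have h5 : ((Real.sqrt 5 : ℝ) : ℂ) ^ 2 = 5 := by
    norm_cast
    exact Real.sq_sqrt (by norm_num)
  unfold u
  push_cast
  linear_combination (1/4 : ℂ) * h5

lemma hω2 : ω ^ 2 = ω - 1 := by
  have h3 : ((Real.sqrt 3 : ℝ) : ℂ) ^ 2 = 3 := by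
    norm_cast
    exact Real.sq_sqrt (by norm_num)
  unfold ω
  linear_combination (Complex.I ^ 2 / 4 : ℂ) * h3 + (3/4 : ℂ) * Complex.I_sq

lemma hu_inv : u⁻¹ = u - 1 :=
  inv_eq_of_mul_eq_one_right (by linear_combination hu2)

lemma hω_inv : ω⁻¹ = 1 - ω :=
  inv_eq_of_mul_eq_one_right (by linear_combination (-1 : ℂ) * hω2)

lemma hω2_inv : (ω ^ 2)⁻¹ = -ω :=
  inv_eq_of_mul_eq_one_right (by linear_combination (-ω - 1) * hω2)

/-- translation matrix -/
def T (t : ℂ) : SL2C := ⟨!![1, t; 0, 1], by simp [Matrix.det_fin_two_of]⟩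

lemma T_mul (a b : ℂ) : T a * T b = T (a + b) := by
  apply Subtype.ext
  show (T a).val * (T b).val = (T (a + b)).val
  unfold T
  ext i j
  fin_cases i <;> fin_cases j <;>
    · simp [Matrix.mul_apply, Fin.sum_univ_succ]
      try ring

lemma T_zero : T 0 = 1 := by
  apply Subtype.ext
  show (T 0).val = (1 : Matrix (Fin 2) (Fin 2) ℂ)
  unfold T
  ext i j
  fin_cases i <;> fin_cases j <;> simp [Matrix.one_apply]

/-- `[T(-)]` as a homomorphism `Multiplicative ℂ →* PSL2C`. -/
def φ : Multiplicative ℂ →* PSL2C where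
  toFun t := pr (T t.toAdd)
  map_one' := by simp [T_zero]
  map_mul' a b := by
    show pr (T (a.toAdd + b.toAdd)) = pr (T a.toAdd) * pr (T b.toAdd)
    rw [← map_mul, T_mul]

def negOne : SL2C := ⟨(-1 : Matrix (Fin 2) (Fin 2) ℂ), by
  rw [show (-1 : Matrix (Fin 2) (Fin 2) ℂ) = -(1 : Matrix (Fin 2) (Fin 2) ℂ) from rfl,
    Matrix.det_neg]
  simp⟩

lemma negOne_mem_center : negOne ∈ Subgroup.center SL2C := by
  rw [Subgroup.mem_center_iff]
  intro g
  apply Subtype.ext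
  show g.val * negOne.val = negOne.val * g.val
  simp [negOne]

lemma pr_negOne : pr negOne = 1 := by
  rw [pr, QuotientGroup.mk'_apply, QuotientGroup.eq_one_iff]
  exact negOne_mem_center

lemma pr_of_neg {A : SL2C} {t : ℂ} (h : A.val = -(T t).val) : pr A = pr (T t) := by
  have hA : A = negOne * T t := by
    apply Subtype.ext
    show A.val = negOne.val * (T t).val
    rw [h]
    simp [negOne]
  rw [hA, map_mul, pr_negOne, one_mul]

lemma x_mem : x ∈ Γ₃ := Subgroup.subset_closure (by simp)
lemma y_mem : y ∈ Γ₃ := Subgroup.subset_closure (by simp)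
lemma z_mem : z ∈ Γ₃ := Subgroup.subset_closure (by simp)

lemma hx_val : xSL.val = !![u, -(u - 1); u, 0] := by
  rw [show xSL.val = !![u, -u⁻¹; u, 0] from rfl, hu_inv]

lemma hy_val : ySL.val = !![0, ω * (u - 1); -(1 - ω) * u, 0] := by
  rw [show ySL.val = !![0, ω * u⁻¹; -ω⁻¹ * u, 0] from rfl, hu_inv, hω_inv]

lemma hz_val : zSL.val = !![0, ω ^ 2 * (u - 1); -(-ω) * u, 0] := by
  rw [show zSL.val = !![0, ω ^ 2 * u⁻¹; -(ω ^ 2)⁻¹ * u, 0] from rfl, hu_inv, hω2_inv]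

lemma word_one : (xSL * ySL * zSL * ySL).val = -(T 1).val := by
  have h4 := hu2
  have h5 := hω2
  show xSL.val * ySL.val * zSL.val * ySL.val = -(T 1).val
  rw [hx_val, hy_val, hz_val, show (T 1).val = !![1, (1:ℂ); 0, 1] from rfl]
  ext i j
  fin_cases i <;> fin_cases j <;>
    simp [Matrix.mul_apply, Fin.sum_univ_succ]
  · linear_combination ((-1)*ω^2 + (2)*ω^3 + (-1)*ω^4 + (1)*u^1*ω^2 + (-2)*u^1*ω^3 + (1)*u^1*ω^4 + (-1)*u^2*ω^2 + (2)*u^2*ω^3 + (-1)*u^2*ω^4) * h4 + ((1) + (1)*ω^1 + (-1)*ω^2) * h5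
  · linear_combination ((1)*ω^3 + (-1)*u^1*ω^3 + (1)*u^2*ω^3) * h4 + ((1) + (1)*ω^1) * h5
  · linear_combination ((1)*ω^3 + (-1)*u^1*ω^3 + (1)*u^2*ω^3) * h4 + ((1) + (1)*ω^1) * h5

lemma word_ω : (xSL * zSL * xSL * ySL).val = -(T ω).val := by
  have h4 := hu2
  have h5 := hω2
  show xSL.val * zSL.val * xSL.val * ySL.val = -(T ω).val
  rw [hx_val, hy_val, hz_val, show (T ω).val = !![1, ω; 0, 1] from rfl]
  ext i j
  fin_cases i <;> fin_cases j <;>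
    simp [Matrix.mul_apply, Fin.sum_univ_succ]
  · linear_combination ((-1)*ω^1 + (1)*ω^2 + (1)*u^1*ω^1 + (-1)*u^1*ω^2 + (-1)*u^2*ω^1 + (1)*u^2*ω^2) * h4 + (1 : ℂ) * h5
  · linear_combination ((-1)*ω^2 + (1)*ω^3 + (1)*u^1*ω^2 + (-1)*u^1*ω^3 + (-1)*u^2*ω^2 + (1)*u^2*ω^3) * h4 + ((1)*ω^1) * h5
  · linear_combination ((1)*ω^3 + (-1)*u^1*ω^3 + (1)*u^2*ω^3) * h4 + ((1) + (1)*ω^1) * h5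

lemma T_one_mem : pr (T 1) ∈ Γ₃ := by
  have : pr (xSL * ySL * zSL * ySL) = pr (T 1) := pr_of_neg word_one
  rw [← this, map_mul, map_mul, map_mul]
  exact mul_mem (mul_mem (mul_mem x_mem y_mem) z_mem) y_mem

lemma T_ω_mem : pr (T ω) ∈ Γ₃ := by
  have : pr (xSL * zSL * xSL * ySL) = pr (T ω) := pr_of_neg word_ω
  rw [← this, map_mul, map_mul, map_mul]
  exact mul_mem (mul_mem (mul_mem x_mem z_mem) x_mem) y_mem

/-- Every parabolic `[[1, n+mω],[0,1]]` lies in `Γ(5,2,2,3,3,3)`. -/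
theorem stmt9 (n m : ℤ) :
    pr ⟨!![1, (n : ℂ) + (m : ℂ) * ω; 0, 1], by simp [Matrix.det_fin_two_of]⟩ ∈ Γ₃ := by
  show pr (T ((n : ℂ) + (m : ℂ) * ω)) ∈ Γ₃
  have key : ∀ (k : ℤ) (t : ℂ), pr (T t) ∈ Γ₃ → pr (T ((k : ℂ) * t)) ∈ Γ₃ := by
    intro k t ht
    have hφ : ∀ c : ℂ, pr (T c) = φ (Multiplicative.ofAdd c) := fun _ => rfl
    have : pr (T ((k : ℂ) * t)) = (pr (T t)) ^ k := by
      rw [hφ, hφ, ← map_zpow]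
      congr 1
      rw [← ofAdd_zsmul]
      congr 1
      simp [zsmul_eq_mul]
    rw [this]
    exact zpow_mem ht k
  have h1 : pr (T ((n : ℂ) * 1)) ∈ Γ₃ := key n 1 T_one_mem
  have h2 : pr (T ((m : ℂ) * ω)) ∈ Γ₃ := key m ω T_ω_mem
  have := mul_mem h1 h2
  rw [← map_mul, T_mul] at this
  simpa using this
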